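/- Let {U_j}, {V_i} be a margin-m relative-bias-0 embedding of S_{n,k} in dimension d, with n ≥ 3k, and let V : R^n → R^d be the linear map sending e_i to V_i. Then for every x ∈ R^n with at most k nonzero coordinates, ‖V x‖₂ ≥ m‖x‖₁. -/
import Mathlib


open RealInnerProductSpace

theorem stmt7 {n k d : ℕ} (hnk : 3 * k ≤ n) (m : ℝ) (hm : 0 < m)
    (U : {S : Finset (Fin n) // S.card = k} → EuclideanSpace ℝ (Fin d))
    (V : Fin n → EuclideanSpace ℝ (Fin d))
    (hU : ∀ S, ‖U S‖ = 1) (hV : ∀ i, ‖V i‖ = 1)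
    (hpos : ∀ S i, i ∈ S.1 → m ≤ ⟪U S, V i⟫)
    (hneg : ∀ S i, i ∉ S.1 → ⟪U S, V i⟫ ≤ -m)
    (x : Fin n → ℝ) (hx : (Finset.univ.filter fun i => x i ≠ 0).card ≤ k) :
    m * ∑ i, |x i| ≤ ‖∑ i, x i • V i‖ := by
  classical
  set P : Finset (Fin n) := Finset.univ.filter (fun i => 0 < x i) with hP
  set N : Finset (Fin n) := Finset.univ.filter (fun i => x i < 0) with hN
  have hPsub : P ⊆ Finset.univ.filter fun i => x i ≠ 0 := by
    intro i hi; simp only [hP, Finset.mem_filter] at *; exact ⟨hi.1, ne_of_gt hi.2⟩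
  have hNsub : N ⊆ Finset.univ.filter fun i => x i ≠ 0 := by
    intro i hi; simp only [hN, Finset.mem_filter] at *; exact ⟨hi.1, ne_of_lt hi.2⟩
  have hPN : P ⊆ Nᶜ := by
    intro i hi
    simp only [hP, hN, Finset.mem_filter, Finset.mem_compl] at *
    intro h; exact absurd hi.2 (not_lt.2 h.2.le)
  have hPc : P.card ≤ k := le_trans (Finset.card_le_card hPsub) hx
  have hNc : N.card ≤ k := le_trans (Finset.card_le_card hNsub) hx
  have hNcc : k ≤ Nᶜ.card := by
    rw [Finset.card_compl]
    simp only [Fintype.card_fin]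
    omega
  obtain ⟨S, hPS, hSN, hScard⟩ := Finset.exists_subsuperset_card_eq hPN hPc hNcc
  set u : EuclideanSpace ℝ (Fin d) := U ⟨S, hScard⟩ with hu
  have key : ∀ i, m * |x i| ≤ x i * ⟪u, V i⟫ := by
    intro i
    rcases lt_trichotomy (x i) 0 with h | h | h
    · have hiN : i ∈ N := by simp [hN, h]
      have hiS : i ∉ S := fun hmem => by
        have := hSN hmem; rw [Finset.mem_compl] at this; exact this hiN
      have := hneg ⟨S, hScard⟩ i hiS
      rw [abs_of_neg h]
      nlinarith
    · simp [h]
    · have hiP : i ∈ P := by simp [hP, h]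
      have := hpos ⟨S, hScard⟩ i (hPS hiP)
      rw [abs_of_pos h]
      nlinarith
  calc m * ∑ i, |x i| = ∑ i, m * |x i| := Finset.mul_sum _ _ _
    _ ≤ ∑ i, x i * ⟪u, V i⟫ := Finset.sum_le_sum fun i _ => key i
    _ = ⟪u, ∑ i, x i • V i⟫ := by
        rw [inner_sum]
        exact Finset.sum_congr rfl fun i _ => (real_inner_smul_right _ _ _).symm
    _ ≤ ‖u‖ * ‖∑ i, x i • V i‖ := real_inner_le_norm _ _
    _ = ‖∑ i, x i • V i‖ := by rw [hU]; ring
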